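/- arXiv:2502.02705 — 2 statements merged into one kernel-verified Lean document; each statement's English description precedes it below -/
import Mathlib

section
/- (One-step improvement bound) If a stationary policy π satisfies, for all s, the one-step relation E_{a∼π(·|s), s'∼p(·|s,a)}[r̄(s,s')] ≥ Q_H^*(s,π) - γ E_{s'}[Q_H^*(s',π)] - γδ (where r̄(s,s') = r(s) + γ V_sim(s') - V_sim(s)), then the infinite-horizon value of π satisfies V^π(s₀) ≥ Q_H^*(s₀,π) + V_sim(s₀) - γδ/(1-γ) for every initial state s₀. -/
open Finset

section MDP

variable {S A : Type} [Fintype S] [Fintype A] [DecidableEq S]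

/-- `q` is a Markov transition kernel (pmf over next states for each state-action). -/
def IsKernel (q : S → A → S → ℝ) : Prop :=
  ∀ s a, (∀ s', 0 ≤ q s a s') ∧ (∑ s', q s a s') = 1

/-- A time-dependent stochastic policy sequence. -/
def IsPolicySeq (π : ℕ → S → A → ℝ) : Prop :=
  ∀ t s, (∀ a, 0 ≤ π t s a) ∧ (∑ a, π t s a) = 1

/-- A stationary stochastic policy. -/
def IsStationaryPolicy (π : S → A → ℝ) : Prop :=
  ∀ s, (∀ a, 0 ≤ π s a) ∧ (∑ a, π s a) = 1

/-- H-step value `E[γ^H V(s_H) + ∑_{t<H} γ^t r(s_t)]` of a time-dependent policy under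
kernel `q`, with terminal value `V`. -/
noncomputable def valH (q : S → A → S → ℝ) (r : S → ℝ) (γ : ℝ) (V : S → ℝ) :
    ℕ → (ℕ → S → A → ℝ) → S → ℝ
  | 0, _, s => V s
  | H + 1, π, s =>
      r s + γ * ∑ a, π 0 s a * ∑ s', q s a s' * valH q r γ V H (fun t => π (t + 1)) s'

/-- Optimal H-step value: supremum over H-step (time-dependent stochastic) policies. -/
noncomputable def VHopt (q : S → A → S → ℝ) (r : S → ℝ) (γ : ℝ) (V : S → ℝ)
    (H : ℕ) (s : S) : ℝ :=
  sSup {x | ∃ π, IsPolicySeq π ∧ valH q r γ V H π s = x}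

/-- One step of the state-distribution dynamics induced by kernel `q` and stationary
policy `π`. -/
noncomputable def pushforward (q : S → A → S → ℝ) (π : S → A → ℝ) (μ : S → ℝ) : S → ℝ :=
  fun s' => ∑ s, μ s * ∑ a, π s a * q s a s'

/-- Distribution of the state at time `t` of the Markov chain induced by `π` from `s₀`. -/
noncomputable def stateDist (q : S → A → S → ℝ) (π : S → A → ℝ) (s0 : S) (t : ℕ) :
    S → ℝ :=
  (pushforward q π)^[t] (fun s => if s = s0 then 1 else 0)

/-- Infinite-horizon discounted value of stationary policy `π` from `s₀`. -/
noncomputable def Vinf (q : S → A → S → ℝ) (r : S → ℝ) (γ : ℝ) (π : S → A → ℝ)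
    (s0 : S) : ℝ :=
  ∑' t : ℕ, γ ^ t * ∑ s, stateDist q π s0 t s * r s

/-- Optimal infinite-horizon discounted value. -/
noncomputable def Vstar (q : S → A → S → ℝ) (r : S → ℝ) (γ : ℝ) (s0 : S) : ℝ :=
  sSup {x | ∃ π, IsStationaryPolicy π ∧ Vinf q r γ π s0 = x}

end MDP

section Aux

variable {S A : Type} [Fintype S] [Fintype A] [DecidableEq S]

lemma exp_pushforward (p : S → A → S → ℝ) (π : S → A → ℝ) (μ : S → ℝ) (g : S → ℝ) :
    ∑ s', pushforward p π μ s' * g s'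
      = ∑ s, μ s * ∑ a, π s a * ∑ s', p s a s' * g s' := by
  simp only [pushforward, Finset.sum_mul, Finset.mul_sum]
  rw [Finset.sum_comm]
  refine Finset.sum_congr rfl fun s _ => ?_
  rw [Finset.sum_comm]
  refine Finset.sum_congr rfl fun a _ => ?_
  refine Finset.sum_congr rfl fun s' _ => ?_
  ring

lemma stateDist_nonneg (p : S → A → S → ℝ) (hp : IsKernel p)
    (π : S → A → ℝ) (hπ : IsStationaryPolicy π) (s0 : S) :
    ∀ t s, 0 ≤ stateDist p π s0 t s := by
  intro t
  induction t with
  | zero => intro s; simp only [stateDist, Function.iterate_zero, id]; positivity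
  | succ n ih =>
      intro s
      rw [stateDist, Function.iterate_succ_apply']
      refine Finset.sum_nonneg fun x _ => mul_nonneg (ih x) ?_
      exact Finset.sum_nonneg fun a _ =>
        mul_nonneg ((hπ x).1 a) ((hp x a).1 s)

lemma stateDist_sum (p : S → A → S → ℝ) (hp : IsKernel p)
    (π : S → A → ℝ) (hπ : IsStationaryPolicy π) (s0 : S) :
    ∀ t, ∑ s, stateDist p π s0 t s = 1 := by
  intro t
  induction t with
  | zero => simp [stateDist]
  | succ n ih =>
      have hrec : stateDist p π s0 (n+1) = pushforward p π (stateDist p π s0 n) := by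
        simp [stateDist, Function.iterate_succ_apply']
      have h := exp_pushforward p π (stateDist p π s0 n) (fun _ => (1:ℝ))
      simp only [mul_one] at h
      rw [hrec, h]
      have hps : ∀ x a, (∑ s', p x a s') = 1 := fun x a => (hp x a).2
      simp only [hps, mul_one]
      have hπs : ∀ x, (∑ a, π x a) = 1 := fun x => (hπ x).2
      simp only [hπs, mul_one, ih]

lemma pmf_weighted_abs_le (μ g : S → ℝ) (hμ0 : ∀ s, 0 ≤ μ s) (hμ1 : ∑ s, μ s = 1) :
    |∑ s, μ s * g s| ≤ ∑ s, |g s| := by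
  calc |∑ s, μ s * g s| ≤ ∑ s, |μ s * g s| := Finset.abs_sum_le_sum_abs _ _
    _ = ∑ s, μ s * |g s| := by
        refine Finset.sum_congr rfl fun s _ => ?_
        rw [abs_mul, abs_of_nonneg (hμ0 s)]
    _ ≤ ∑ s, |g s| := by
        refine Finset.sum_le_sum fun s _ => ?_
        have hle : μ s ≤ 1 := by
          calc μ s ≤ ∑ x, μ x :=
              Finset.single_le_sum (fun x _ => hμ0 x) (Finset.mem_univ s)
            _ = 1 := hμ1
        nlinarith [abs_nonneg (g s), hμ0 s]

end Aux

/-- One-step improvement bound: if the stationary policy `π` satisfies the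
pointwise one-step relation
`E[r̄(s,s')] ≥ Q(s) - γ E[Q(s')] - γδ` (with `r̄(s,s') = r(s) + γ V_sim(s') - V_sim(s)`
and expectations over `a ∼ π(·|s)`, `s' ∼ p(·|s,a)`), then
`V^π(s₀) ≥ Q(s₀) + V_sim(s₀) - γδ/(1-γ)` for every initial state `s₀`. -/
theorem stmt_9 {S A : Type} [Fintype S] [Fintype A] [DecidableEq S]
    [Nonempty S] [Nonempty A]
    (p : S → A → S → ℝ) (hp : IsKernel p)
    (r Vsim : S → ℝ) (γ : ℝ) (hγ0 : 0 ≤ γ) (hγ1 : γ < 1)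
    (π : S → A → ℝ) (hπ : IsStationaryPolicy π) (δ : ℝ) (hδ : 0 ≤ δ)
    (Q : S → ℝ)
    (hstep : ∀ s : S,
      (∑ a, π s a * ∑ s', p s a s' * (r s + γ * Vsim s' - Vsim s))
        ≥ Q s - γ * (∑ a, π s a * ∑ s', p s a s' * Q s') - γ * δ) :
    ∀ s0 : S, Vinf p r γ π s0 ≥ Q s0 + Vsim s0 - γ * δ / (1 - γ) := by
  intro s0
  set μ : ℕ → S → ℝ := stateDist p π s0 with hμ
  have hμ0 : ∀ t s, 0 ≤ μ t s := stateDist_nonneg p hp π hπ s0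
  have hμ1 : ∀ t, ∑ s, μ t s = 1 := stateDist_sum p hp π hπ s0
  have hrec : ∀ t, μ (t+1) = pushforward p π (μ t) := by
    intro t; simp [hμ, stateDist, Function.iterate_succ_apply']
  -- expectations
  set R : ℕ → ℝ := fun t => ∑ s, μ t s * r s with hR
  set F : ℕ → ℝ := fun t => ∑ s, μ t s * (Q s + Vsim s) with hF
  -- next-state expectation identity
  have hnext : ∀ (g : S → ℝ) (t : ℕ),
      ∑ s, μ t s * ∑ a, π s a * ∑ s', p s a s' * g s' = ∑ s, μ (t+1) s * g s := by
    intro g t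
    rw [hrec t, exp_pushforward]
  -- key step inequality: R t ≥ F t - γ * F (t+1) - γ * δ
  have hkey : ∀ t, R t ≥ F t - γ * F (t+1) - γ * δ := by
    intro t
    have hsum : ∑ s, μ t s * (∑ a, π s a * ∑ s', p s a s' * (r s + γ * Vsim s' - Vsim s))
        ≥ ∑ s, μ t s * (Q s - γ * (∑ a, π s a * ∑ s', p s a s' * Q s') - γ * δ) := by
      refine Finset.sum_le_sum fun s _ => mul_le_mul_of_nonneg_left (hstep s) (hμ0 t s)
    -- simplify LHS
    have hLHS : ∑ s, μ t s * (∑ a, π s a * ∑ s', p s a s' * (r s + γ * Vsim s' - Vsim s))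
        = R t - (∑ s, μ t s * Vsim s) + γ * ∑ s, μ (t+1) s * Vsim s := by
      have hinner : ∀ s, (∑ a, π s a * ∑ s', p s a s' * (r s + γ * Vsim s' - Vsim s))
          = (r s - Vsim s) + γ * ∑ a, π s a * ∑ s', p s a s' * Vsim s' := by
        intro s
        have h1 : ∀ a, ∑ s', p s a s' * (r s + γ * Vsim s' - Vsim s)
            = (r s - Vsim s) + γ * ∑ s', p s a s' * Vsim s' := by
          intro a
          have : ∑ s', p s a s' * (r s + γ * Vsim s' - Vsim s)
              = (∑ s', p s a s') * (r s - Vsim s) + γ * ∑ s', p s a s' * Vsim s' := by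
            rw [Finset.sum_mul, Finset.mul_sum, ← Finset.sum_add_distrib]
            exact Finset.sum_congr rfl fun s' _ => by ring
          rw [this, (hp s a).2, one_mul]
        simp only [h1]
        calc ∑ a, π s a * ((r s - Vsim s) + γ * ∑ s', p s a s' * Vsim s')
            = (∑ a, π s a) * (r s - Vsim s)
                + γ * ∑ a, π s a * ∑ s', p s a s' * Vsim s' := by
              rw [Finset.sum_mul, Finset.mul_sum, ← Finset.sum_add_distrib]
              exact Finset.sum_congr rfl fun a _ => by ring
          _ = _ := by rw [(hπ s).2, one_mul]
      calc ∑ s, μ t s * (∑ a, π s a * ∑ s', p s a s' * (r s + γ * Vsim s' - Vsim s))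
          = ∑ s, (μ t s * (r s - Vsim s)
              + γ * (μ t s * ∑ a, π s a * ∑ s', p s a s' * Vsim s')) := by
            refine Finset.sum_congr rfl fun s _ => by rw [hinner s]; ring
        _ = (∑ s, μ t s * (r s - Vsim s))
              + γ * ∑ s, μ t s * ∑ a, π s a * ∑ s', p s a s' * Vsim s' := by
            rw [Finset.sum_add_distrib, Finset.mul_sum]
        _ = R t - (∑ s, μ t s * Vsim s) + γ * ∑ s, μ (t+1) s * Vsim s := by
            rw [hnext Vsim t]
            congr 1
            simp only [mul_sub, Finset.sum_sub_distrib, hR]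
    -- simplify RHS
    have hRHS : ∑ s, μ t s * (Q s - γ * (∑ a, π s a * ∑ s', p s a s' * Q s') - γ * δ)
        = (∑ s, μ t s * Q s) - γ * (∑ s, μ (t+1) s * Q s) - γ * δ := by
      calc ∑ s, μ t s * (Q s - γ * (∑ a, π s a * ∑ s', p s a s' * Q s') - γ * δ)
          = ∑ s, (μ t s * Q s - γ * (μ t s * ∑ a, π s a * ∑ s', p s a s' * Q s')
              - (γ * δ) * μ t s) := by
            refine Finset.sum_congr rfl fun s _ => by ring
        _ = (∑ s, μ t s * Q s) - γ * (∑ s, μ t s * ∑ a, π s a * ∑ s', p s a s' * Q s')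
              - (γ * δ) * ∑ s, μ t s := by
            simp only [Finset.sum_sub_distrib, Finset.mul_sum]
        _ = _ := by rw [hnext Q t, hμ1 t, mul_one]
    rw [hLHS, hRHS] at hsum
    have hFt : ∀ u, F u = (∑ s, μ u s * Q s) + (∑ s, μ u s * Vsim s) := by
      intro u
      simp only [hF, mul_add, Finset.sum_add_distrib]
    rw [hFt t, hFt (t+1)]
    linarith [hsum]
  -- partial sums
  set SN : ℕ → ℝ := fun N => ∑ t ∈ Finset.range N, γ ^ t * R t with hSN
  have hpartial : ∀ N, SN N ≥ F 0 - γ ^ N * F N - δ * (γ * ∑ t ∈ Finset.range N, γ ^ t) := by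
    intro N
    have h1 : ∀ t, γ ^ t * R t ≥ (γ ^ t * F t - γ ^ (t+1) * F (t+1)) - γ ^ (t+1) * δ := by
      intro t
      have h := mul_le_mul_of_nonneg_left (hkey t) (pow_nonneg hγ0 t)
      have heq : γ ^ t * F t - γ ^ (t+1) * F (t+1) - γ ^ (t+1) * δ
          = γ ^ t * (F t - γ * F (t+1) - γ * δ) := by rw [pow_succ]; ring
      rw [ge_iff_le, heq]
      exact h
    calc SN N ≥ ∑ t ∈ Finset.range N, ((γ ^ t * F t - γ ^ (t+1) * F (t+1)) - γ ^ (t+1) * δ) :=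
          Finset.sum_le_sum fun t _ => h1 t
      _ = (γ ^ 0 * F 0 - γ ^ N * F N) - δ * (γ * ∑ t ∈ Finset.range N, γ ^ t) := by
          rw [Finset.sum_sub_distrib, Finset.sum_range_sub' (fun t => γ ^ t * F t)]
          congr 1
          rw [Finset.mul_sum, Finset.mul_sum]
          refine Finset.sum_congr rfl fun t _ => ?_
          rw [pow_succ]; ring
      _ = F 0 - γ ^ N * F N - δ * (γ * ∑ t ∈ Finset.range N, γ ^ t) := by
          rw [pow_zero, one_mul]
  -- bounds for limits
  set CR : ℝ := ∑ s, |r s| with hCR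
  set CF : ℝ := ∑ s, |Q s + Vsim s| with hCF
  have hRbd : ∀ t, |R t| ≤ CR := fun t =>
    pmf_weighted_abs_le (μ t) r (hμ0 t) (hμ1 t)
  have hFbd : ∀ t, |F t| ≤ CF := fun t =>
    pmf_weighted_abs_le (μ t) (fun s => Q s + Vsim s) (hμ0 t) (hμ1 t)
  -- summability of the value series
  have hsummable : Summable (fun t => γ ^ t * R t) := by
    refine Summable.of_norm_bounded (g := fun t => CR * γ ^ t)
      ((summable_geometric_of_lt_one hγ0 hγ1).mul_left CR) fun t => ?_
    rw [Real.norm_eq_abs, abs_mul, abs_pow, abs_of_nonneg hγ0]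
    calc γ ^ t * |R t| ≤ γ ^ t * CR :=
          mul_le_mul_of_nonneg_left (hRbd t) (pow_nonneg hγ0 t)
      _ = CR * γ ^ t := mul_comm _ _
  have hVinf : Filter.Tendsto SN Filter.atTop (nhds (Vinf p r γ π s0)) := by
    have := hsummable.hasSum.tendsto_sum_nat
    simpa [Vinf, hSN, hR, hμ] using this
  -- limit of RHS
  have hgeom : Filter.Tendsto (fun N => ∑ t ∈ Finset.range N, γ ^ t)
      Filter.atTop (nhds ((1 - γ)⁻¹)) :=
    (hasSum_geometric_of_lt_one hγ0 hγ1).tendsto_sum_nat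
  have hzero : Filter.Tendsto (fun N => γ ^ N * F N) Filter.atTop (nhds 0) := by
    have hb : Filter.Tendsto (fun N : ℕ => CF * γ ^ N) Filter.atTop (nhds 0) := by
      have : Filter.Tendsto (fun N : ℕ => γ ^ N) Filter.atTop (nhds 0) :=
        tendsto_pow_atTop_nhds_zero_of_lt_one hγ0 hγ1
      simpa using this.const_mul CF
    refine squeeze_zero_norm (a := fun N => CF * γ ^ N) (fun N => ?_) hb
    rw [Real.norm_eq_abs, abs_mul, abs_pow, abs_of_nonneg hγ0]
    calc γ ^ N * |F N| ≤ γ ^ N * CF :=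
          mul_le_mul_of_nonneg_left (hFbd N) (pow_nonneg hγ0 N)
      _ = CF * γ ^ N := mul_comm _ _
  have hRHSlim : Filter.Tendsto
      (fun N => F 0 - γ ^ N * F N - δ * (γ * ∑ t ∈ Finset.range N, γ ^ t))
      Filter.atTop (nhds (F 0 - 0 - δ * (γ * (1 - γ)⁻¹))) := by
    exact (tendsto_const_nhds.sub hzero).sub ((hgeom.const_mul γ).const_mul δ)
  -- conclude
  have hle : F 0 - 0 - δ * (γ * (1 - γ)⁻¹) ≤ Vinf p r γ π s0 :=
    le_of_tendsto_of_tendsto' hRHSlim hVinf fun N => hpartial N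
  have hF0 : F 0 = Q s0 + Vsim s0 := by
    simp [hF, hμ, stateDist]
  rw [hF0] at hle
  have : δ * (γ * (1 - γ)⁻¹) = γ * δ / (1 - γ) := by
    field_simp
  linarith [hle, this.symm ▸ hle]
end

section
/- (Policy invariance under potential-based shaping) For an infinite-horizon discounted MDP, replacing r(s) by r̄(s,s') = r(s) + γΦ(s') - Φ(s) changes every policy's value function by the same state-dependent constant: V̄^π(s) = V^π(s) - Φ(s) for every stationary policy π and state s. Consequently, the set of optimal policies of the reshaped MDP equals that of the original MDP. -/
open Finset

/-- Infinite-horizon discounted value of stationary policy `π` for a transition-dependent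
reward `rbar(s,s')`. -/
noncomputable def VinfShaped {S A : Type} [Fintype S] [Fintype A] [DecidableEq S]
    (q : S → A → S → ℝ) (rbar : S → S → ℝ) (γ : ℝ) (π : S → A → ℝ) (s0 : S) : ℝ :=
  ∑' t : ℕ, γ ^ t * ∑ s, stateDist q π s0 t s *
    ∑ a, π s a * ∑ s', q s a s' * rbar s s'

/-- Optimal infinite-horizon value for the transition-dependent reward `rbar`. -/
noncomputable def VstarShaped {S A : Type} [Fintype S] [Fintype A] [DecidableEq S]
    (q : S → A → S → ℝ) (rbar : S → S → ℝ) (γ : ℝ) (s0 : S) : ℝ :=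
  sSup {x | ∃ π, IsStationaryPolicy π ∧ VinfShaped q rbar γ π s0 = x}


section AuxShaping
variable {S A : Type} [Fintype S] [Fintype A] [DecidableEq S]

lemma stateDist_succ' (q : S → A → S → ℝ) (π : S → A → ℝ) (s0 : S) (t : ℕ) :
    stateDist q π s0 (t + 1) = pushforward q π (stateDist q π s0 t) := by
  simp [stateDist, Function.iterate_succ_apply']

lemma stateDist_prob (p : S → A → S → ℝ) (hp : IsKernel p)
    (π : S → A → ℝ) (hπ : IsStationaryPolicy π) (s0 : S) (t : ℕ) :
    (∀ s, 0 ≤ stateDist p π s0 t s) ∧ ∑ s, stateDist p π s0 t s = 1 := by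
  induction t with
  | zero =>
    constructor
    · intro s; simp only [stateDist, Function.iterate_zero, id]
      split <;> norm_num
    · simp [stateDist]
  | succ t ih =>
    rw [stateDist_succ']
    constructor
    · intro s'
      exact Finset.sum_nonneg fun s _ => mul_nonneg (ih.1 s)
        (Finset.sum_nonneg fun a _ => mul_nonneg ((hπ s).1 a) ((hp s a).1 s'))
    · unfold pushforward
      rw [Finset.sum_comm]
      have h : ∀ s, ∑ s', stateDist p π s0 t s * ∑ a, π s a * p s a s'
          = stateDist p π s0 t s := by
        intro s
        rw [← Finset.mul_sum, Finset.sum_comm]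
        have h1 : ∀ a, ∑ s', π s a * p s a s' = π s a := by
          intro a; rw [← Finset.mul_sum, (hp s a).2, mul_one]
        simp only [h1, (hπ s).2, mul_one]
      simp only [h, ih.2]

omit [DecidableEq S] in
lemma weighted_abs_le (μ g : S → ℝ) (h0 : ∀ s, 0 ≤ μ s) (h1 : ∑ s, μ s = 1) :
    |∑ s, μ s * g s| ≤ ∑ s, |g s| := by
  calc |∑ s, μ s * g s| ≤ ∑ s, |μ s * g s| := Finset.abs_sum_le_sum_abs _ _
    _ ≤ ∑ s, |g s| := by
        apply Finset.sum_le_sum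
        intro s _
        rw [abs_mul, abs_of_nonneg (h0 s)]
        have hle : μ s ≤ 1 := h1 ▸ Finset.single_le_sum (fun i _ => h0 i) (mem_univ s)
        nlinarith [abs_nonneg (g s)]

lemma summable_geo_mul {γ : ℝ} (hγ0 : 0 ≤ γ) (hγ1 : γ < 1) {f : ℕ → ℝ} {C : ℝ}
    (hf : ∀ t, |f t| ≤ C) : Summable (fun t => γ ^ t * f t) := by
  apply Summable.of_norm_bounded
    ((summable_geometric_of_lt_one hγ0 hγ1).mul_right C)
  intro t
  rw [Real.norm_eq_abs, abs_mul, abs_pow, abs_of_nonneg hγ0]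
  exact mul_le_mul_of_nonneg_left (hf t) (pow_nonneg hγ0 t)

lemma shaped_row (p : S → A → S → ℝ) (hp : IsKernel p)
    (π : S → A → ℝ) (hπ : IsStationaryPolicy π) (r Φ : S → ℝ) (γ : ℝ) (s0 : S) (t : ℕ) :
    ∑ s, stateDist p π s0 t s * ∑ a, π s a * ∑ s', p s a s' * (r s + γ * Φ s' - Φ s)
    = (∑ s, stateDist p π s0 t s * r s)
      + (γ * ∑ s, stateDist p π s0 (t + 1) s * Φ s
      - ∑ s, stateDist p π s0 t s * Φ s) := by
  have hin : ∀ s, ∑ a, π s a * ∑ s', p s a s' * (r s + γ * Φ s' - Φ s)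
      = r s - Φ s + γ * ∑ a, π s a * ∑ s', p s a s' * Φ s' := by
    intro s
    have e1 : ∀ a, ∑ s', p s a s' * (r s + γ * Φ s' - Φ s)
        = (r s - Φ s) + γ * ∑ s', p s a s' * Φ s' := by
      intro a
      have : ∀ s', p s a s' * (r s + γ * Φ s' - Φ s)
          = p s a s' * (r s - Φ s) + γ * (p s a s' * Φ s') := fun s' => by ring
      rw [Finset.sum_congr rfl fun s' _ => this s', Finset.sum_add_distrib,
          ← Finset.sum_mul, (hp s a).2, one_mul, ← Finset.mul_sum]
    rw [Finset.sum_congr rfl fun a _ => by rw [e1 a]]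
    have e2 : ∀ a, π s a * ((r s - Φ s) + γ * ∑ s', p s a s' * Φ s')
        = π s a * (r s - Φ s) + γ * (π s a * ∑ s', p s a s' * Φ s') := fun a => by ring
    rw [Finset.sum_congr rfl fun a _ => e2 a, Finset.sum_add_distrib,
        ← Finset.sum_mul, (hπ s).2, one_mul, ← Finset.mul_sum]
  rw [Finset.sum_congr rfl fun s _ => by rw [hin s]]
  have e3 : ∀ s, stateDist p π s0 t s * (r s - Φ s + γ * ∑ a, π s a * ∑ s', p s a s' * Φ s')
      = (stateDist p π s0 t s * r s - stateDist p π s0 t s * Φ s)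
        + γ * (stateDist p π s0 t s * ∑ a, π s a * ∑ s', p s a s' * Φ s') :=
    fun s => by ring
  rw [Finset.sum_congr rfl fun s _ => e3 s, Finset.sum_add_distrib,
      Finset.sum_sub_distrib, ← Finset.mul_sum]
  have hpush : ∑ s, stateDist p π s0 t s * ∑ a, π s a * ∑ s', p s a s' * Φ s'
      = ∑ s', stateDist p π s0 (t + 1) s' * Φ s' := by
    have hsw : ∀ s, ∑ a, π s a * ∑ s', p s a s' * Φ s'
        = ∑ s', (∑ a, π s a * p s a s') * Φ s' := by
      intro s
      simp only [Finset.mul_sum, Finset.sum_mul]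
      rw [Finset.sum_comm]
      exact Finset.sum_congr rfl fun s' _ => Finset.sum_congr rfl fun a _ => by ring
    rw [stateDist_succ']
    unfold pushforward
    rw [Finset.sum_congr rfl fun s _ => by rw [hsw s, Finset.mul_sum], Finset.sum_comm]
    simp only [Finset.sum_mul]
    exact Finset.sum_congr rfl fun s' _ => Finset.sum_congr rfl fun s _ => by
      rw [← Finset.sum_mul]; ring
  rw [hpush]
  ring

omit [Fintype S] [Fintype A] [DecidableEq S] in
lemma tsum_telescope_geo {γ : ℝ} (hγ0 : 0 ≤ γ) (hγ1 : γ < 1) (Ar B : ℕ → ℝ)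
    {CA CB : ℝ} (hAbd : ∀ t, |Ar t| ≤ CA) (hBbd : ∀ t, |B t| ≤ CB) :
    ∑' t : ℕ, (γ ^ t * Ar t + (γ ^ (t + 1) * B (t + 1) - γ ^ t * B t))
      = (∑' t : ℕ, γ ^ t * Ar t) - B 0 := by
  have hA : Summable fun t => γ ^ t * Ar t := summable_geo_mul hγ0 hγ1 hAbd
  have hB : Summable fun t => γ ^ t * B t := summable_geo_mul hγ0 hγ1 hBbd
  have hB' : Summable fun t => γ ^ (t + 1) * B (t + 1) := (summable_nat_add_iff 1).2 hB
  rw [Summable.tsum_add hA (hB'.sub hB), Summable.tsum_sub hB' hB]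
  have hshift := Summable.tsum_eq_zero_add hB
  have : (∑' t : ℕ, γ ^ (t + 1) * B (t + 1)) - ∑' t : ℕ, γ ^ t * B t = -B 0 := by
    rw [hshift]; simp
  rw [this]; ring

lemma vinfShaped_eq (p : S → A → S → ℝ) (hp : IsKernel p)
    (π : S → A → ℝ) (hπ : IsStationaryPolicy π)
    (r Φ : S → ℝ) (γ : ℝ) (hγ0 : 0 ≤ γ) (hγ1 : γ < 1) (s0 : S) :
    VinfShaped p (fun s s' => r s + γ * Φ s' - Φ s) γ π s0 = Vinf p r γ π s0 - Φ s0 := by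
  have hμ := stateDist_prob p hp π hπ s0
  have hterm : ∀ t : ℕ, γ ^ t * ∑ s, stateDist p π s0 t s *
        ∑ a, π s a * ∑ s', p s a s' * (r s + γ * Φ s' - Φ s)
      = γ ^ t * ((fun t => ∑ s, stateDist p π s0 t s * r s) t)
        + (γ ^ (t + 1) * ((fun t => ∑ s, stateDist p π s0 t s * Φ s) (t + 1))
          - γ ^ t * ((fun t => ∑ s, stateDist p π s0 t s * Φ s) t)) := by
    intro t
    rw [shaped_row p hp π hπ r Φ γ s0 t]
    ring
  have hB0 : (fun t => ∑ s, stateDist p π s0 t s * Φ s) 0 = Φ s0 := by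
    simp [stateDist]
  calc VinfShaped p (fun s s' => r s + γ * Φ s' - Φ s) γ π s0
      = ∑' t : ℕ, (γ ^ t * ((fun t => ∑ s, stateDist p π s0 t s * r s) t)
        + (γ ^ (t + 1) * ((fun t => ∑ s, stateDist p π s0 t s * Φ s) (t + 1))
          - γ ^ t * ((fun t => ∑ s, stateDist p π s0 t s * Φ s) t))) :=
        tsum_congr hterm
    _ = (∑' t : ℕ, γ ^ t * ((fun t => ∑ s, stateDist p π s0 t s * r s) t))
          - (fun t => ∑ s, stateDist p π s0 t s * Φ s) 0 :=
        tsum_telescope_geo hγ0 hγ1 _ _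
          (fun t => weighted_abs_le _ r (hμ t).1 (hμ t).2)
          (fun t => weighted_abs_le _ Φ (hμ t).1 (hμ t).2)
    _ = Vinf p r γ π s0 - Φ s0 := by rw [hB0]; rfl

omit [Fintype S] [DecidableEq S] in
lemma exists_stationary [Nonempty A] : ∃ π : S → A → ℝ, IsStationaryPolicy π := by
  refine ⟨fun _ _ => (Fintype.card A : ℝ)⁻¹, fun s => ⟨fun a => by positivity, ?_⟩⟩
  rw [Finset.sum_const, Finset.card_univ, nsmul_eq_mul]
  have : (Fintype.card A : ℝ) ≠ 0 := by
    exact_mod_cast Fintype.card_ne_zero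
  field_simp

lemma vinf_le (p : S → A → S → ℝ) (hp : IsKernel p)
    (r : S → ℝ) (γ : ℝ) (hγ0 : 0 ≤ γ) (hγ1 : γ < 1)
    (π : S → A → ℝ) (hπ : IsStationaryPolicy π) (s0 : S) :
    Vinf p r γ π s0 ≤ (∑ s, |r s|) * (1 - γ)⁻¹ := by
  have hμ := stateDist_prob p hp π hπ s0
  have hbd : ∀ t, |∑ s, stateDist p π s0 t s * r s| ≤ ∑ s, |r s| :=
    fun t => weighted_abs_le _ r (hμ t).1 (hμ t).2
  have hA : Summable fun t => γ ^ t * ∑ s, stateDist p π s0 t s * r s :=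
    summable_geo_mul hγ0 hγ1 hbd
  have hg : Summable fun t : ℕ => γ ^ t * ∑ s, |r s| :=
    (summable_geometric_of_lt_one hγ0 hγ1).mul_right _
  calc Vinf p r γ π s0 ≤ ∑' t : ℕ, γ ^ t * ∑ s, |r s| := by
        apply Summable.tsum_le_tsum _ hA hg
        intro t
        exact mul_le_mul_of_nonneg_left ((le_abs_self _).trans (hbd t)) (pow_nonneg hγ0 t)
    _ = (∑ s, |r s|) * (1 - γ)⁻¹ := by
        rw [tsum_mul_right, tsum_geometric_of_lt_one hγ0 hγ1, mul_comm]

lemma vstarShaped_eq [Nonempty A] (p : S → A → S → ℝ) (hp : IsKernel p)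
    (r Φ : S → ℝ) (γ : ℝ) (hγ0 : 0 ≤ γ) (hγ1 : γ < 1) (s0 : S) :
    VstarShaped p (fun s s' => r s + γ * Φ s' - Φ s) γ s0 = Vstar p r γ s0 - Φ s0 := by
  have hset : {x | ∃ π, IsStationaryPolicy π ∧
        VinfShaped p (fun s s' => r s + γ * Φ s' - Φ s) γ π s0 = x}
      = (fun x => x + (-Φ s0)) '' {x | ∃ π, IsStationaryPolicy π ∧ Vinf p r γ π s0 = x} := by
    ext x
    constructor
    · rintro ⟨π, hπ, rfl⟩
      refine ⟨Vinf p r γ π s0, ⟨π, hπ, rfl⟩, ?_⟩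
      show Vinf p r γ π s0 + -Φ s0 = _
      rw [vinfShaped_eq p hp π hπ r Φ γ hγ0 hγ1 s0]; ring
    · rintro ⟨y, ⟨π, hπ, rfl⟩, rfl⟩
      exact ⟨π, hπ, by rw [vinfShaped_eq p hp π hπ r Φ γ hγ0 hγ1 s0]; ring⟩
  have hne : {x | ∃ π, IsStationaryPolicy π ∧ Vinf p r γ π s0 = x}.Nonempty := by
    obtain ⟨π, hπ⟩ := exists_stationary (S := S) (A := A)
    exact ⟨Vinf p r γ π s0, π, hπ, rfl⟩
  have hbdd : BddAbove {x | ∃ π, IsStationaryPolicy π ∧ Vinf p r γ π s0 = x} := by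
    refine ⟨(∑ s, |r s|) * (1 - γ)⁻¹, ?_⟩
    rintro x ⟨π, hπ, rfl⟩
    exact vinf_le p hp r γ hγ0 hγ1 π hπ s0
  unfold VstarShaped Vstar
  rw [hset]
  have h2 := (OrderIso.addRight (-Φ s0)).map_csSup' hne hbdd
  have himg : ⇑(OrderIso.addRight (-Φ s0)) '' {x | ∃ π, IsStationaryPolicy π ∧ Vinf p r γ π s0 = x}
      = (fun x => x + -Φ s0) '' {x | ∃ π, IsStationaryPolicy π ∧ Vinf p r γ π s0 = x} := rfl
  rw [← himg, ← h2]
  simp [sub_eq_add_neg]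

end AuxShaping

/-- Policy invariance under potential-based shaping: replacing `r(s)` by
`r̄(s,s') = r(s) + γΦ(s') - Φ(s)` shifts every stationary policy's value by `-Φ(s)`:
`V̄^π(s) = V^π(s) - Φ(s)`.  Consequently a stationary policy is optimal for the reshaped
MDP iff it is optimal for the original MDP. -/
theorem stmt_10 {S A : Type} [Fintype S] [Fintype A] [DecidableEq S]
    [Nonempty S] [Nonempty A]
    (p : S → A → S → ℝ) (hp : IsKernel p)
    (r Φ : S → ℝ) (γ : ℝ) (hγ0 : 0 ≤ γ) (hγ1 : γ < 1) :
    (∀ π : S → A → ℝ, IsStationaryPolicy π → ∀ s : S,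
      VinfShaped p (fun s s' => r s + γ * Φ s' - Φ s) γ π s = Vinf p r γ π s - Φ s) ∧
    (∀ π : S → A → ℝ, IsStationaryPolicy π →
      ((∀ s : S, Vinf p r γ π s = Vstar p r γ s) ↔
        (∀ s : S, VinfShaped p (fun s s' => r s + γ * Φ s' - Φ s) γ π s
          = VstarShaped p (fun s s' => r s + γ * Φ s' - Φ s) γ s))) := by
  refine ⟨fun π hπ s => vinfShaped_eq p hp π hπ r Φ γ hγ0 hγ1 s, fun π hπ => ?_⟩
  constructor
  · intro h s
    rw [vinfShaped_eq p hp π hπ r Φ γ hγ0 hγ1 s,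
        vstarShaped_eq p hp r Φ γ hγ0 hγ1 s, h s]
  · intro h s
    have := h s
    rw [vinfShaped_eq p hp π hπ r Φ γ hγ0 hγ1 s,
        vstarShaped_eq p hp r Φ γ hγ0 hγ1 s] at this
    linarith
end
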